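/- Let n ≥ 3 and let 𝒯₁ = (T₁, l₁) and 𝒯₂ = (T₂, l₂) be two labeled trees on the same set of n leaves, with label set {spec, dup}. Then the ELRF distance between 𝒯₁ and 𝒯₂ is at most 3n − 8. -/

import Mathlib

open Sum

inductive Lbl | spec | dup
deriving DecidableEq

/-- A labeled (unrooted) tree on leaf set `L`: internal vertices form a type `I`, the tree has
no vertex of degree 2, leaves (the vertices from `L`) have degree 1, internal vertices are
non-leaves, and each internal vertex carries a label from `{spec, dup}`. -/
structure LabTree (L : Type) : Type 1 where
  I : Type
  fin : Fintype I
  graph : SimpleGraph (L ⊕ I)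
  isTree : graph.IsTree
  leaf_deg : ∀ l : L, (graph.neighborSet (inl l)).ncard = 1
  internal_deg : ∀ i : I,
    (graph.neighborSet (inr i)).ncard ≠ 1 ∧ (graph.neighborSet (inr i)).ncard ≠ 2
  lbl : I → Lbl

variable {L : Type}

/-- Isomorphism of labeled trees, fixing every leaf. -/
def LIso (T T' : LabTree L) : Prop :=
  ∃ φ : (L ⊕ T.I) ≃ (L ⊕ T'.I),
    (∀ l : L, φ (inl l) = inl l) ∧
    (∀ a b, T'.graph.Adj (φ a) (φ b) ↔ T.graph.Adj a b) ∧
    (∀ i i', φ (inr i) = inr i' → T'.lbl i' = T.lbl i)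

/-- `T'` is obtained from `T` by a label-flip: the label of exactly one internal vertex is
changed. -/
def FlipStep (T T' : LabTree L) : Prop :=
  ∃ (φ : (L ⊕ T.I) ≃ (L ⊕ T'.I)) (u : T.I),
    (∀ l : L, φ (inl l) = inl l) ∧
    (∀ a b, T'.graph.Adj (φ a) (φ b) ↔ T.graph.Adj a b) ∧
    (∀ i i', φ (inr i) = inr i' → i ≠ u → T'.lbl i' = T.lbl i) ∧
    (∀ i', φ (inr u) = inr i' → T'.lbl i' ≠ T.lbl u)

/-- `T'` is obtained from `T` by contracting the internal edge `uv` via the quotient map `φ`: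
`u` and `v` are identified, the merged vertex keeps one of the two labels, all other
vertices and labels are unchanged. -/
def ContractionVia (T T' : LabTree L) (u v : T.I) (φ : (L ⊕ T.I) → (L ⊕ T'.I)) : Prop :=
  T.graph.Adj (inr u) (inr v) ∧
  (∀ l : L, φ (inl l) = inl l) ∧
  Function.Surjective φ ∧
  φ (inr u) = φ (inr v) ∧
  (∀ a b, φ a = φ b → a = b ∨ (a = inr u ∧ b = inr v) ∨ (a = inr v ∧ b = inr u)) ∧
  (∀ x y, T'.graph.Adj x y ↔ ∃ a b, φ a = x ∧ φ b = y ∧ T.graph.Adj a b ∧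
      ¬(a = inr u ∧ b = inr v) ∧ ¬(a = inr v ∧ b = inr u)) ∧
  (∀ i i', φ (inr i) = inr i' → i ≠ u → i ≠ v → T'.lbl i' = T.lbl i) ∧
  (∀ i', φ (inr u) = inr i' → (T'.lbl i' = T.lbl u ∨ T'.lbl i' = T.lbl v))

/-- A contraction of some internal edge (LRF operation; its reverse is an extension). -/
def IsContraction (T T' : LabTree L) : Prop :=
  ∃ u v φ, ContractionVia T T' u v φ

/-- A labeled contraction: contraction of an internal edge whose endpoints carry the same
label (ELRF operation; its reverse is a labeled extension). -/
def IsLabeledContraction (T T' : LabTree L) : Prop :=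
  ∃ u v φ, T.lbl u = T.lbl v ∧ ContractionVia T T' u v φ

/-- One ELRF operation: a label-flip, a labeled contraction, or a labeled extension. -/
def ELRFStep (T T' : LabTree L) : Prop :=
  FlipStep T T' ∨ IsLabeledContraction T T' ∨ IsLabeledContraction T' T

/-- One LRF operation: a label-flip, a contraction, or an extension. -/
def LRFStep (T T' : LabTree L) : Prop :=
  FlipStep T T' ∨ IsContraction T T' ∨ IsContraction T' T

section GraphCounting

variable {V : Type*} [Fintype V]

/-- A preconnected graph on a finite vertex type has at least `card V - 1` edges. -/
lemma card_le_ncard_edgeSet_add_one (G : SimpleGraph V) (h : G.Preconnected) :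
    Fintype.card V ≤ G.edgeSet.ncard + 1 := by
  classical
  rcases isEmpty_or_nonempty V with hV | hV
  · simp [Fintype.card_eq_zero]
  obtain ⟨r⟩ := hV
  have key : ∀ v : {v : V // v ≠ r}, ∃ b, G.Adj v.1 b ∧ G.dist b r < G.dist v.1 r := by
    rintro ⟨v, hv⟩
    show ∃ b, G.Adj v b ∧ G.dist b r < G.dist v r
    have hr : G.Reachable v r := h v r
    have hd : 0 < G.dist v r := hr.pos_dist_of_ne hv
    obtain ⟨p, hp⟩ := hr.exists_walk_length_eq_dist
    cases p with
    | nil => simp at hd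
    | cons hadj q =>
      refine ⟨_, hadj, ?_⟩
      have := SimpleGraph.dist_le q
      simp [SimpleGraph.Walk.length_cons] at hp
      omega
  choose g hadj hlt using key
  have hinj : Function.Injective fun v : {v : V // v ≠ r} =>
      (⟨s(v.1, g v), (hadj v)⟩ : G.edgeSet) := by
    rintro v w hvw
    have hvw' := Subtype.ext_iff.mp hvw
    rw [Sym2.eq_iff] at hvw'
    rcases hvw' with ⟨h1, h2⟩ | ⟨h1, h2⟩
    · exact Subtype.ext h1
    · exfalso
      have hv := hlt v
      have hw := hlt w
      rw [h1] at hv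
      rw [← h2] at hw
      omega
  have hcard := Nat.card_le_card_of_injective _ hinj
  have h1 : Nat.card {v : V // v ≠ r} = Fintype.card V - 1 := by
    rw [Nat.card_eq_fintype_card]
    simp [Fintype.card_subtype_compl (· = r)]
  have h2 : Nat.card G.edgeSet = G.edgeSet.ncard := Nat.card_coe_set_eq _
  rw [h2] at hcard
  have : 1 ≤ Fintype.card V := @Fintype.card_pos V _ ⟨r⟩
  omega

/-- A connected graph with exactly `card V - 1` edges is a tree. -/
lemma isTree_of_connected_of_ncard (G : SimpleGraph V) (hc : G.Connected)
    (hcard : Fintype.card V = G.edgeSet.ncard + 1) : G.IsTree := by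
  classical
  refine ⟨hc, ?_⟩
  rw [SimpleGraph.isAcyclic_iff_forall_adj_isBridge]
  intro v w hadj
  by_contra hnb
  have hreach : (G \ SimpleGraph.fromEdgeSet {s(v, w)}).Reachable v w := by
    by_contra hr
    exact hnb hr
  set G₂ := G \ SimpleGraph.fromEdgeSet {s(v, w)} with hG₂
  have hstep : ∀ a b : V, G.Adj a b → G₂.Reachable a b := by
    intro a b hab
    by_cases he : s(a, b) = s(v, w)
    · rw [Sym2.eq_iff] at he
      rcases he with ⟨h1, h2⟩ | ⟨h1, h2⟩
      · subst h1; subst h2; exact hreach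
      · subst h1; subst h2; exact hreach.symm
    · refine SimpleGraph.Adj.reachable ?_
      rw [hG₂, SimpleGraph.sdiff_adj]
      refine ⟨hab, ?_⟩
      rw [SimpleGraph.fromEdgeSet_adj]
      rintro ⟨h1, -⟩
      exact he (by simpa using h1)
  have hpre : G₂.Preconnected := by
    intro a b
    have := (hc.preconnected a b).some
    clear hcard
    induction this with
    | nil => exact SimpleGraph.Reachable.refl _
    | cons hadj' p ih => exact (hstep _ _ hadj').trans ih
  have hedge : G₂.edgeSet = G.edgeSet \ {s(v, w)} := by
    rw [hG₂, SimpleGraph.edgeSet_sdiff, SimpleGraph.edgeSet_fromEdgeSet]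
    ext e
    simp only [Set.mem_diff, Set.mem_singleton_iff, Set.mem_setOf_eq]
    constructor
    · rintro ⟨h1, h2⟩
      refine ⟨h1, fun hev => h2 ⟨hev, ?_⟩⟩
      subst hev
      simp [Sym2.isDiag_iff_proj_eq, hadj.ne]
    · rintro ⟨h1, h2⟩
      exact ⟨h1, fun h => h2 h.1⟩
  have hmem : s(v, w) ∈ G.edgeSet := hadj
  have hfin : G.edgeSet.Finite := Set.toFinite _
  have hcard2 : G₂.edgeSet.ncard = G.edgeSet.ncard - 1 := by
    rw [hedge, Set.ncard_diff_singleton_of_mem hmem]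
  have h1 : 1 ≤ G.edgeSet.ncard := by
    have : G.edgeSet.Nonempty := ⟨_, hmem⟩
    rwa [← Set.ncard_pos hfin] at this
  have := card_le_ncard_edgeSet_add_one G₂ hpre
  omega

lemma IsTree.ncard_edgeSet (G : SimpleGraph V) (hG : G.IsTree) :
    G.edgeSet.ncard + 1 = Fintype.card V := by
  classical
  have := hG.card_edgeFinset
  rw [← Nat.card_coe_set_eq, Nat.card_eq_fintype_card, ← SimpleGraph.edgeFinset_card]; exact this
  
end GraphCounting

-- SECTION 2 --
namespace ELRFAux

lemma equiv_inr {A B : Type} (φ : (L ⊕ A) ≃ (L ⊕ B)) (hl : ∀ l : L, φ (inl l) = inl l)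
    (i : A) : ∃ j : B, φ (inr i) = inr j := by
  cases h : φ (inr i) with
  | inl l => exact absurd (φ.injective (h.trans (hl l).symm)) (by simp)
  | inr j => exact ⟨j, rfl⟩

lemma equiv_symm_inl {A B : Type} (φ : (L ⊕ A) ≃ (L ⊕ B)) (hl : ∀ l : L, φ (inl l) = inl l)
    (l : L) : φ.symm (inl l) = inl l := by
  rw [Equiv.symm_apply_eq, hl l]

lemma LIso.refl (T : LabTree L) : LIso T T := by
  refine ⟨Equiv.refl _, fun l => rfl, fun a b => Iff.rfl, fun i i' h => ?_⟩
  simp only [Equiv.refl_apply, inr.injEq] at h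
  rw [h]

lemma LIso.symm {T T' : LabTree L} (h : LIso T T') : LIso T' T := by
  obtain ⟨φ, hl, ha, hb⟩ := h
  refine ⟨φ.symm, equiv_symm_inl φ hl, fun a b => ?_, fun i i' hii => ?_⟩
  · conv_rhs => rw [← φ.apply_symm_apply a, ← φ.apply_symm_apply b]
    exact (ha _ _).symm
  · have : φ (inr i') = inr i := by rw [← hii, φ.apply_symm_apply]
    exact (hb _ _ this).symm

lemma LIso.trans {T₁ T₂ T₃ : LabTree L} (h : LIso T₁ T₂) (h' : LIso T₂ T₃) : LIso T₁ T₃ := by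
  obtain ⟨φ, hl, ha, hb⟩ := h
  obtain ⟨ψ, hl', ha', hb'⟩ := h'
  refine ⟨φ.trans ψ, fun l => by simp [hl, hl'], fun a b => ?_, fun i i' hii => ?_⟩
  · simp only [Equiv.trans_apply]
    rw [ha', ha]
  · obtain ⟨j, hj⟩ := equiv_inr φ hl i
    simp only [Equiv.trans_apply, hj] at hii
    rw [hb' _ _ hii, hb _ _ hj]

lemma FlipStep.symm {T T' : LabTree L} (h : FlipStep T T') : FlipStep T' T := by
  obtain ⟨φ, u, hl, ha, hb, hc⟩ := h
  obtain ⟨u', hu'⟩ := equiv_inr φ hl u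
  refine ⟨φ.symm, u', equiv_symm_inl φ hl, fun a b => ?_, fun i i' hii hne => ?_, fun i' hii => ?_⟩
  · conv_rhs => rw [← φ.apply_symm_apply a, ← φ.apply_symm_apply b]
    exact (ha _ _).symm
  · have h2 : φ (inr i') = inr i := by rw [← hii, φ.apply_symm_apply]
    have : i' ≠ u := by
      rintro rfl
      rw [hu'] at h2
      injection h2 with h2
      exact hne h2.symm
    exact (hb _ _ h2 this).symm
  · have h2 : φ.symm (inr u') = inr u := by rw [← hu', φ.symm_apply_apply]
    rw [h2] at hii
    injection hii with hii
    subst hii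
    exact (hc u' hu').symm

lemma contr_inr {T T' : LabTree L} {u v : T.I} {φ} (hC : ContractionVia T T' u v φ)
    (i : T.I) : ∃ j : T'.I, φ (inr i) = inr j := by
  obtain ⟨-, hl, -, -, hfib, -⟩ := hC
  cases h : φ (inr i) with
  | inl l =>
    have := hfib (inr i) (inl l) (h.trans (hl l).symm)
    simp at this
  | inr j => exact ⟨j, rfl⟩

/-- transport a contraction along an isomorphism of the target -/
lemma ContractionVia.congr_right {T T' T'' : LabTree L} {u v : T.I} {φ}
    (hC : ContractionVia T T' u v φ) (ψ : (L ⊕ T'.I) ≃ (L ⊕ T''.I))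
    (hl : ∀ l : L, ψ (inl l) = inl l)
    (ha : ∀ a b, T''.graph.Adj (ψ a) (ψ b) ↔ T'.graph.Adj a b)
    (hb : ∀ i i', ψ (inr i) = inr i' → T''.lbl i' = T'.lbl i) :
    ContractionVia T T'' u v (fun a => ψ (φ a)) := by
  obtain ⟨hadj, hleaf, hsurj, huv, hfib, hAdj, hlbl1, hlbl2⟩ := hC
  have hC' : ContractionVia T T' u v φ :=
    ⟨hadj, hleaf, hsurj, huv, hfib, hAdj, hlbl1, hlbl2⟩
  refine ⟨hadj, fun l => by simp only []; rw [hleaf, hl], ψ.surjective.comp hsurj,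
    by simp only []; rw [huv], fun a b hab => hfib a b (ψ.injective hab), fun x y => ?_,
    fun i i' hii hu hv => ?_, fun i' hii => ?_⟩
  · rw [← ψ.apply_symm_apply x, ← ψ.apply_symm_apply y, ha, hAdj]
    constructor
    · rintro ⟨a, b, h1, h2, h3⟩
      exact ⟨a, b, by simp only []; rw [h1], by simp only []; rw [h2], h3⟩
    · rintro ⟨a, b, h1, h2, h3⟩
      simp only [] at h1 h2
      exact ⟨a, b, ψ.injective h1, ψ.injective h2, h3⟩
  · obtain ⟨j, hj⟩ := contr_inr hC' i
    simp only [] at hii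
    rw [hj] at hii
    rw [hb _ _ hii, hlbl1 _ _ hj hu hv]
  · obtain ⟨j, hj⟩ := contr_inr hC' u
    simp only [] at hii
    rw [hj] at hii
    rw [hb _ _ hii]
    exact hlbl2 _ hj

/-- transport a contraction along an isomorphism of the source -/
lemma ContractionVia.congr_left {T T' T'' : LabTree L} {u v : T.I} {φ}
    (hC : ContractionVia T T' u v φ) (ψ : (L ⊕ T.I) ≃ (L ⊕ T''.I))
    (hl : ∀ l : L, ψ (inl l) = inl l)
    (ha : ∀ a b, T''.graph.Adj (ψ a) (ψ b) ↔ T.graph.Adj a b)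
    (hb : ∀ i i', ψ (inr i) = inr i' → T''.lbl i' = T.lbl i) :
    ∃ (u'' v'' : T''.I) (φ'' : (L ⊕ T''.I) → (L ⊕ T'.I)),
      T''.lbl u'' = T.lbl u ∧ T''.lbl v'' = T.lbl v ∧ ContractionVia T'' T' u'' v'' φ'' := by
  obtain ⟨hadj, hleaf, hsurj, huv, hfib, hAdj, hlbl1, hlbl2⟩ := hC
  obtain ⟨u'', hu''⟩ := equiv_inr ψ hl u
  obtain ⟨v'', hv''⟩ := equiv_inr ψ hl v
  have hψu : ψ.symm (inr u'') = inr u := by rw [← hu'', ψ.symm_apply_apply]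
  have hψv : ψ.symm (inr v'') = inr v := by rw [← hv'', ψ.symm_apply_apply]
  have hsl := equiv_symm_inl ψ hl
  refine ⟨u'', v'', fun a => φ (ψ.symm a), hb _ _ hu'', hb _ _ hv'', ?_, fun l => ?_,
    hsurj.comp ψ.symm.surjective, ?_, fun a b hab => ?_, fun x y => ?_,
    fun i i' hii hu hv => ?_, fun i' hii => ?_⟩
  · rw [← hu'', ← hv'', ha]; exact hadj
  · show φ (ψ.symm (inl l)) = inl l
    rw [hsl, hleaf]
  · show φ (ψ.symm (inr u'')) = φ (ψ.symm (inr v''))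
    rw [hψu, hψv]; exact huv
  · simp only [] at hab
    rcases hfib _ _ hab with h1 | ⟨h1, h2⟩ | ⟨h1, h2⟩
    · exact Or.inl (ψ.symm.injective h1)
    · refine Or.inr (Or.inl ⟨?_, ?_⟩)
      · rw [← hu'']; rw [Equiv.symm_apply_eq] at h1; exact h1
      · rw [← hv'']; rw [Equiv.symm_apply_eq] at h2; exact h2
    · refine Or.inr (Or.inr ⟨?_, ?_⟩)
      · rw [← hv'']; rw [Equiv.symm_apply_eq] at h1; exact h1
      · rw [← hu'']; rw [Equiv.symm_apply_eq] at h2; exact h2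
  · rw [hAdj]
    constructor
    · rintro ⟨a, b, h1, h2, h3, h4, h5⟩
      refine ⟨ψ a, ψ b, ?_, ?_, ?_, ?_, ?_⟩
      · show φ (ψ.symm (ψ a)) = x
        rw [ψ.symm_apply_apply]; exact h1
      · show φ (ψ.symm (ψ b)) = y
        rw [ψ.symm_apply_apply]; exact h2
      · exact (ha a b).mpr h3
      · rintro ⟨ha1, ha2⟩
        rw [← hu''] at ha1
        rw [← hv''] at ha2
        exact h4 ⟨ψ.injective ha1, ψ.injective ha2⟩
      · rintro ⟨ha1, ha2⟩
        rw [← hv''] at ha1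
        rw [← hu''] at ha2
        exact h5 ⟨ψ.injective ha1, ψ.injective ha2⟩
    · rintro ⟨a, b, h1, h2, h3, h4, h5⟩
      simp only [] at h1 h2
      refine ⟨ψ.symm a, ψ.symm b, h1, h2, ?_, ?_, ?_⟩
      · rw [← ha, ψ.apply_symm_apply, ψ.apply_symm_apply]; exact h3
      · rintro ⟨ha1, ha2⟩
        rw [← hψu] at ha1
        rw [← hψv] at ha2
        exact h4 ⟨ψ.symm.injective ha1, ψ.symm.injective ha2⟩
      · rintro ⟨ha1, ha2⟩
        rw [← hψv] at ha1
        rw [← hψu] at ha2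
        exact h5 ⟨ψ.symm.injective ha1, ψ.symm.injective ha2⟩
  · simp only [] at hii
    obtain ⟨j, hj⟩ := equiv_inr ψ.symm hsl i
    rw [hj] at hii
    have hji : ψ (inr j) = inr i := by rw [← hj, ψ.apply_symm_apply]
    have hju : j ≠ u := by
      rintro rfl
      rw [hu''] at hji
      injection hji with hji
      exact hu hji.symm
    have hjv : j ≠ v := by
      rintro rfl
      rw [hv''] at hji
      injection hji with hji
      exact hv hji.symm
    rw [hlbl1 _ _ hii hju hjv, hb _ _ hji]
  · simp only [] at hii
    rw [hψu] at hii
    rcases hlbl2 _ hii with h1 | h1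
    · exact Or.inl (by rw [h1, hb _ _ hu''])
    · exact Or.inr (by rw [h1, hb _ _ hv''])

/-- transport a flip along an isomorphism of the target -/
lemma FlipStep.congr_right {T T' T'' : LabTree L} (h : FlipStep T T') (h2 : LIso T' T'') :
    FlipStep T T'' := by
  obtain ⟨φ, u, hl, ha, hb, hc⟩ := h
  obtain ⟨ψ, hl', ha', hb'⟩ := h2
  refine ⟨φ.trans ψ, u, fun l => by simp [hl, hl'], fun a b => ?_, fun i i' hii hne => ?_,
    fun i' hii => ?_⟩
  · simp only [Equiv.trans_apply]
    rw [ha', ha]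
  · simp only [Equiv.trans_apply] at hii
    obtain ⟨j, hj⟩ := equiv_inr φ hl i
    rw [hj] at hii
    rw [hb' _ _ hii, hb _ _ hj hne]
  · simp only [Equiv.trans_apply] at hii
    obtain ⟨j, hj⟩ := equiv_inr φ hl u
    rw [hj] at hii
    rw [hb' _ _ hii]
    exact hc _ hj

lemma step_symm {T T' : LabTree L} (h : ELRFStep T T') : ELRFStep T' T := by
  rcases h with h | h | h
  · exact Or.inl (FlipStep.symm h)
  · exact Or.inr (Or.inr h)
  · exact Or.inr (Or.inl h)

lemma step_congr_right {T T' T'' : LabTree L} (h : ELRFStep T T') (hI : LIso T' T'') :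
    ELRFStep T T'' := by
  obtain ⟨ψ, hl, ha, hb⟩ := hI
  rcases h with h | ⟨u, v, φ, hlbl, hC⟩ | ⟨u, v, φ, hlbl, hC⟩
  · exact Or.inl (FlipStep.congr_right h ⟨ψ, hl, ha, hb⟩)
  · exact Or.inr (Or.inl ⟨u, v, _, hlbl, ContractionVia.congr_right hC ψ hl ha hb⟩)
  · obtain ⟨u'', v'', φ'', heq1, heq2, hC''⟩ := ContractionVia.congr_left hC ψ hl ha hb
    exact Or.inr (Or.inr ⟨u'', v'', φ'', by rw [heq1, heq2, hlbl], hC''⟩)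


attribute [instance] LabTree.fin

inductive Rel : ℕ → LabTree L → LabTree L → Prop
  | refl {A B : LabTree L} : LIso A B → Rel 0 A B
  | cons {k : ℕ} {A A' B C : LabTree L} :
      LIso A A' → ELRFStep A' B → Rel k B C → Rel (k + 1) A C

lemma Rel.congr_left {A A' B : LabTree L} {k : ℕ} (h : LIso A' A) (r : Rel k A B) :
    Rel k A' B := by
  cases r with
  | refl h2 => exact Rel.refl (LIso.trans h h2)
  | cons h1 h2 h3 => exact Rel.cons (LIso.trans h h1) h2 h3

lemma Rel.congr_right {A B B' : LabTree L} {k : ℕ} (r : Rel k A B) (h : LIso B B') :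
    Rel k A B' := by
  induction r with
  | refl h2 => exact Rel.refl (LIso.trans h2 h)
  | cons h1 h2 _ ih => exact Rel.cons h1 h2 (ih h)

lemma Rel.trans {A B C : LabTree L} {a b : ℕ} (r1 : Rel a A B) (r2 : Rel b B C) :
    Rel (a + b) A C := by
  induction r1 generalizing C b with
  | refl h =>
    rw [Nat.zero_add]
    exact r2.congr_left h
  | @cons k _ _ _ _ h1 h2 _ ih =>
    have := Rel.cons h1 h2 (ih r2)
    rwa [show k + b + 1 = k + 1 + b by omega] at this

lemma Rel.single {A B : LabTree L} (h : ELRFStep A B) : Rel 1 A B :=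
  Rel.cons (LIso.refl A) h (Rel.refl (LIso.refl B))

lemma Rel.symm {A B : LabTree L} {k : ℕ} (r : Rel k A B) : Rel k B A := by
  induction r with
  | refl h => exact Rel.refl (LIso.symm h)
  | @cons k _ _ _ _ h1 h2 _ ih =>
    have s1 : Rel 1 _ _ := Rel.single (step_symm h2)
    have s2 := s1.congr_right (LIso.symm h1)
    exact ih.trans s2

lemma Rel.exists_fun {A B : LabTree L} {k : ℕ} (r : Rel k A B) :
    ∃ f : ℕ → LabTree L, LIso (f 0) A ∧ LIso (f k) B ∧
      ∀ i < k, ELRFStep (f i) (f (i + 1)) := by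
  induction r with
  | @refl A B h =>
    exact ⟨fun _ => A, LIso.refl A, h, fun i hi => absurd hi (by omega)⟩
  | @cons k A A' B C h1 h2 _ ih =>
    obtain ⟨f, hf0, hfk, hfs⟩ := ih
    refine ⟨fun i => match i with | 0 => A' | (j + 1) => f j, LIso.symm h1, hfk, ?_⟩
    intro i hi
    match i with
    | 0 =>
      show ELRFStep A' (f 0)
      exact step_congr_right h2 (LIso.symm hf0)
    | (j + 1) =>
      exact hfs j (by omega)

/-- relabelling a tree -/
def relabel (T : LabTree L) (m : T.I → Lbl) : LabTree L :=
  { T with lbl := m }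

lemma flip_chain_aux : ∀ (k : ℕ) (T : LabTree L) (m : T.I → Lbl),
    (Finset.univ.filter (fun i => T.lbl i ≠ m i)).card = k → Rel k T (relabel T m) := by
  intro k
  induction k with
  | zero =>
    intro T m hcard
    rw [Finset.card_eq_zero, Finset.filter_eq_empty_iff] at hcard
    refine Rel.refl ⟨Equiv.refl _, fun l => rfl, fun a b => Iff.rfl, fun i i' h => ?_⟩
    have e : i = i' := Sum.inr.inj h
    show m i' = T.lbl i
    rw [← e]
    have := hcard (Finset.mem_univ i)
    simp only [ne_eq, not_not] at this
    exact this.symm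
  | succ k ih =>
    intro T m hcard
    classical
    have hne : (Finset.univ.filter (fun i => T.lbl i ≠ m i)).Nonempty := by
      rw [← Finset.card_pos, hcard]; omega
    obtain ⟨u, hu⟩ := hne
    have hu2 : T.lbl u ≠ m u := (Finset.mem_filter.mp hu).2
    set T' : LabTree L := relabel T (Function.update T.lbl u (m u)) with hT'
    have hstep : FlipStep T T' := by
      refine ⟨Equiv.refl _, u, fun l => rfl, fun a b => Iff.rfl,
        fun i i' h hne2 => ?_, fun i' h => ?_⟩
      · have e : i = i' := Sum.inr.inj h
        show Function.update T.lbl u (m u) i' = T.lbl i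
        rw [← e, Function.update_of_ne hne2]
      · have e : u = i' := Sum.inr.inj h
        show Function.update T.lbl u (m u) i' ≠ T.lbl u
        rw [← e, Function.update_self]
        exact fun hh => hu2 hh.symm
    have hrest : Rel k T' (relabel T' m) := by
      apply ih
      show (@Finset.filter T.I (fun i => T'.lbl i ≠ m i) (fun i => @instDecidableNot _ (instDecidableEqLbl _ _)) Finset.univ).card = k
      have : (@Finset.filter T.I (fun i => T'.lbl i ≠ m i) (fun i => @instDecidableNot _ (instDecidableEqLbl _ _)) Finset.univ) =
          (Finset.univ.filter (fun i => T.lbl i ≠ m i)).erase u := by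
        ext i
        simp only [Finset.mem_filter, Finset.mem_univ, true_and, Finset.mem_erase, ne_eq]
        constructor
        · intro h
          by_cases hiu : i = u
          · exact absurd (show T'.lbl i = m i by
              rw [hiu]; show Function.update T.lbl u (m u) u = m u
              rw [Function.update_self]) h
          · refine ⟨hiu, fun hh => h ?_⟩
            show Function.update T.lbl u (m u) i = m i
            rw [Function.update_of_ne hiu, hh]
        · rintro ⟨hiu, h⟩
          intro hh
          apply h
          show T.lbl i = m i
          rwa [show T'.lbl i = T.lbl i from Function.update_of_ne hiu _ _] at hh
      rw [this, Finset.card_erase_of_mem hu, hcard]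
      omega
    have hfinal : relabel T' m = relabel T m := rfl
    rw [hfinal] at hrest
    exact Rel.cons (LIso.refl T) (Or.inl hstep) hrest

lemma flip_chain (T : LabTree L) (m : T.I → Lbl) :
    Rel (Finset.univ.filter (fun i => T.lbl i ≠ m i)).card T (relabel T m) :=
  flip_chain_aux _ T m rfl


section Counting

variable [Fintype L]

lemma ncard_neighborSet_eq_degree {V : Type*} [Fintype V] (G : SimpleGraph V)
    [DecidableRel G.Adj] (x : V) : (G.neighborSet x).ncard = G.degree x := by
  rw [← SimpleGraph.card_neighborSet_eq_degree, ← Nat.card_coe_set_eq,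
    Nat.card_eq_fintype_card]

lemma handshake (T : LabTree L) :
    ∑ x : L ⊕ T.I, (T.graph.neighborSet x).ncard = 2 * T.graph.edgeSet.ncard := by
  classical
  have := SimpleGraph.sum_degrees_eq_twice_card_edges T.graph
  calc ∑ x : L ⊕ T.I, (T.graph.neighborSet x).ncard
      = ∑ x : L ⊕ T.I, T.graph.degree x := by
        refine Finset.sum_congr rfl fun x _ => ?_
        exact ncard_neighborSet_eq_degree T.graph x
    _ = 2 * T.graph.edgeFinset.card := this
    _ = 2 * T.graph.edgeSet.ncard := by
        rw [← Nat.card_coe_set_eq, Nat.card_eq_fintype_card, SimpleGraph.edgeFinset_card]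

lemma tri_free (T : LabTree L) {a b c : L ⊕ T.I} (hab : T.graph.Adj a b)
    (hbc : T.graph.Adj b c) (hac : T.graph.Adj a c) : False := by
  have hp1 : (SimpleGraph.Walk.cons hac SimpleGraph.Walk.nil).IsPath := by
    simp [SimpleGraph.Walk.cons_isPath_iff, hac.ne]
  have hp2 : (SimpleGraph.Walk.cons hab (SimpleGraph.Walk.cons hbc
      SimpleGraph.Walk.nil)).IsPath := by
    simp [SimpleGraph.Walk.cons_isPath_iff, hab.ne, hac.ne, hbc.ne]
  have := T.isTree.2.path_unique ⟨_, hp1⟩ ⟨_, hp2⟩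
  have hlen := congrArg (fun p => SimpleGraph.Walk.length p.val) this
  simp [SimpleGraph.Walk.length_cons] at hlen

lemma exists_adj (T : LabTree L) (x : L ⊕ T.I) (hy : ∃ y, y ≠ x) :
    (T.graph.neighborSet x).Nonempty := by
  obtain ⟨y, hy⟩ := hy
  have hr : T.graph.Reachable x y := T.isTree.1.preconnected x y
  obtain ⟨p⟩ := hr
  cases p with
  | nil => exact absurd rfl hy.symm
  | cons h q => exact ⟨_, h⟩

lemma leaf_unique_nbr (T : LabTree L) (l : L) :
    ∃ a, T.graph.neighborSet (inl l) = {a} :=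
  Set.ncard_eq_one.mp (T.leaf_deg l)

lemma internal_deg_ge3 (T : LabTree L) (hL : 1 ≤ Fintype.card L) (i : T.I) :
    3 ≤ (T.graph.neighborSet (inr i)).ncard := by
  have hne : (T.graph.neighborSet (inr i)).Nonempty := by
    refine exists_adj T _ ?_
    obtain ⟨l⟩ := Fintype.card_pos_iff.mp hL
    exact ⟨inl l, by simp⟩
  have h1 : 1 ≤ (T.graph.neighborSet (inr i)).ncard := by
    rw [Nat.one_le_iff_ne_zero]
    intro h0
    rw [Set.ncard_eq_zero (Set.toFinite _)] at h0
    rw [h0] at hne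
    exact Set.not_nonempty_empty hne
  have := T.internal_deg i
  omega

lemma cardI_facts (T : LabTree L) (hL : 3 ≤ Fintype.card L) :
    1 ≤ Fintype.card T.I ∧ Fintype.card T.I ≤ Fintype.card L - 2 := by
  classical
  have hE : T.graph.edgeSet.ncard + 1 = Fintype.card L + Fintype.card T.I := by
    rw [IsTree.ncard_edgeSet T.graph T.isTree, Fintype.card_sum]
  have hsum := handshake T
  rw [Fintype.sum_sum_type] at hsum
  have hleaf : ∑ l : L, (T.graph.neighborSet (inl l)).ncard = Fintype.card L := by
    rw [Finset.sum_congr rfl (fun l _ => T.leaf_deg l)]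
    simp
  rw [hleaf] at hsum
  have hpos : 1 ≤ Fintype.card T.I := by
    by_contra h
    push_neg at h
    have h0 : Fintype.card T.I = 0 := by omega
    have : IsEmpty T.I := Fintype.card_eq_zero_iff.mp h0
    rw [Finset.univ_eq_empty, Finset.sum_empty] at hsum
    omega
  have hint : 3 * Fintype.card T.I ≤ ∑ i : T.I, (T.graph.neighborSet (inr i)).ncard := by
    have := Finset.card_nsmul_le_sum Finset.univ
      (fun i : T.I => (T.graph.neighborSet (inr i)).ncard) 3
      (fun i _ => internal_deg_ge3 T (by omega) i)
    rwa [Finset.card_univ, smul_eq_mul, mul_comm] at this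
  exact ⟨hpos, by omega⟩

end Counting

section Contract

variable [Fintype L]

lemma internal_edge_aux (T : LabTree L) :
    ∀ (x y : L ⊕ T.I) (w : T.graph.Walk x y), w.IsPath →
      (∃ j, x = inr j) → (∃ j, y = inr j) → x ≠ y →
      ∃ u v : T.I, T.graph.Adj (inr u) (inr v) := by
  intro x y w
  induction w with
  | nil => intro _ _ _ hxy; exact absurd rfl hxy
  | @cons x z y h w' ih =>
    intro hp ⟨i₁, hx⟩ hy _
    cases z with
    | inr j =>
      subst hx
      exact ⟨i₁, j, h⟩
    | inl l =>
      cases w' with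
      | nil =>
        obtain ⟨j, hj⟩ := hy
        exact absurd hj (by simp)
      | @cons _ z₂ _ h₂ w'' =>
        exfalso
        obtain ⟨a, ha⟩ := leaf_unique_nbr T l
        have hxa : x ∈ T.graph.neighborSet (inl l) := h.symm
        have hz₂ : z₂ ∈ T.graph.neighborSet (inl l) := h₂
        rw [ha] at hxa hz₂
        have hzx : z₂ = x := by
          rw [Set.mem_singleton_iff] at hxa hz₂
          rw [hz₂, hxa]
        rw [SimpleGraph.Walk.cons_isPath_iff] at hp
        apply hp.2
        rw [SimpleGraph.Walk.support_cons]
        right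
        rw [← hzx]
        exact SimpleGraph.Walk.start_mem_support w''

lemma exists_internal_edge (T : LabTree L) (h2 : 2 ≤ Fintype.card T.I) :
    ∃ u v : T.I, T.graph.Adj (inr u) (inr v) := by
  classical
  obtain ⟨i₁, i₂, hne⟩ := Fintype.exists_pair_of_one_lt_card (α := T.I) (by omega)
  obtain ⟨q⟩ := T.isTree.1.preconnected (inr i₁) (inr i₂)
  exact internal_edge_aux T _ _ q.toPath.val q.toPath.property ⟨i₁, rfl⟩ ⟨i₂, rfl⟩
    (by simp [hne])

lemma contract_step (T : LabTree L) (c : Lbl) (hmono : ∀ i, T.lbl i = c)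
    {u v : T.I} (huv : T.graph.Adj (inr u) (inr v)) :
    ∃ T' : LabTree L, (∀ i, T'.lbl i = c) ∧
      Fintype.card T'.I + 1 = Fintype.card T.I ∧ IsLabeledContraction T T' := by
  classical
  have hne : u ≠ v := fun h => T.graph.loopless.irrefl (inr u) (by rw [h] at huv ⊢; exact huv)
  have hcommon : ∀ a, T.graph.Adj a (inr u) → T.graph.Adj a (inr v) → False :=
    fun a h1 h2 => tri_free T h1 huv h2
  set I' := {i : T.I // i ≠ v} with hI'
  let u' : I' := ⟨u, hne⟩
  let φ : L ⊕ T.I → L ⊕ I' :=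
    Sum.elim (fun l => inl l) (fun i => if h : i = v then inr u' else inr ⟨i, h⟩)
  let ψ : L ⊕ I' → L ⊕ T.I := Sum.map id Subtype.val
  have hφl : ∀ l : L, φ (inl l) = inl l := fun l => rfl
  have hφv : φ (inr v) = inr u' := by simp only [φ, Sum.elim_inr, dif_pos]
  have hφi : ∀ (i : T.I) (hi : i ≠ v), φ (inr i) = inr ⟨i, hi⟩ := by
    intro i hi
    simp only [φ, Sum.elim_inr, dif_neg hi]
  have hφu : φ (inr u) = inr u' := hφi u hne
  have hφψ : ∀ x, φ (ψ x) = x := by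
    rintro (l | ⟨i, hi⟩)
    · rfl
    · exact hφi i hi
  have hsurj : Function.Surjective φ := fun x => ⟨ψ x, hφψ x⟩
  have hfib : ∀ a b, φ a = φ b →
      a = b ∨ (a = inr u ∧ b = inr v) ∨ (a = inr v ∧ b = inr u) := by
    rintro (la | ia) (lb | ib) hab
    · left
      simp only [φ, Sum.elim_inl, inl.injEq] at hab
      rw [hab]
    · exfalso
      by_cases hb : ib = v
      · subst hb; rw [hφl, hφv] at hab; exact absurd hab (by simp)
      · rw [hφl, hφi ib hb] at hab; exact absurd hab (by simp)
    · exfalso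
      by_cases ha : ia = v
      · subst ha; rw [hφl, hφv] at hab; exact absurd hab (by simp)
      · rw [hφl, hφi ia ha] at hab; exact absurd hab (by simp)
    · by_cases ha : ia = v <;> by_cases hb : ib = v
      · left; rw [ha, hb]
      · subst ha
        rw [hφv, hφi ib hb] at hab
        injection hab with hab
        have : u = ib := congrArg Subtype.val hab
        right; right
        exact ⟨rfl, by rw [← this]⟩
      · subst hb
        rw [hφv, hφi ia ha] at hab
        injection hab with hab
        have : ia = u := congrArg Subtype.val hab
        right; left
        exact ⟨by rw [this], rfl⟩
      · rw [hφi ia ha, hφi ib hb] at hab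
        injection hab with hab
        have : ia = ib := congrArg Subtype.val hab
        left; rw [this]
  let G' : SimpleGraph (L ⊕ I') :=
    { Adj := fun x y => x ≠ y ∧ ∃ a b, φ a = x ∧ φ b = y ∧ T.graph.Adj a b
      symm := by
        constructor
        rintro x y ⟨hxy, a, b, ha, hb, hadj⟩
        exact ⟨hxy.symm, b, a, hb, ha, hadj.symm⟩
      loopless := ⟨fun x h => h.1 rfl⟩ }
  have hAdjIff : ∀ x y, G'.Adj x y ↔ ∃ a b, φ a = x ∧ φ b = y ∧ T.graph.Adj a b ∧
      ¬(a = inr u ∧ b = inr v) ∧ ¬(a = inr v ∧ b = inr u) := by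
    intro x y
    constructor
    · rintro ⟨hxy, a, b, ha, hb, hadj⟩
      refine ⟨a, b, ha, hb, hadj, ?_, ?_⟩
      · rintro ⟨rfl, rfl⟩
        rw [← ha, ← hb, hφu, hφv] at hxy
        exact hxy rfl
      · rintro ⟨rfl, rfl⟩
        rw [← ha, ← hb, hφu, hφv] at hxy
        exact hxy rfl
    · rintro ⟨a, b, ha, hb, hadj, hp1, hp2⟩
      refine ⟨?_, a, b, ha, hb, hadj⟩
      rintro rfl
      rcases hfib a b (ha.trans hb.symm) with h | h | h
      · exact T.graph.loopless.irrefl _ (h ▸ hadj)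
      · exact hp1 h
      · exact hp2 h
  -- connectivity
  have hreach : ∀ {a b : L ⊕ T.I}, T.graph.Walk a b → G'.Reachable (φ a) (φ b) := by
    intro a b w
    induction w with
    | nil => exact SimpleGraph.Reachable.refl _
    | @cons a z b h w ih =>
      refine SimpleGraph.Reachable.trans ?_ ih
      by_cases heq : φ a = φ z
      · rw [heq]
      · exact SimpleGraph.Adj.reachable ⟨heq, a, z, rfl, rfl, h⟩
  have hconn : G'.Connected := by
    have : Nonempty (L ⊕ I') := ⟨inr u'⟩
    refine SimpleGraph.Connected.mk fun x y => ?_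
    obtain ⟨w⟩ := T.isTree.1.preconnected (ψ x) (ψ y)
    have := hreach w
    rwa [hφψ, hφψ] at this
  -- edge counting
  have hsetmem : s(inr u, inr v) ∈ T.graph.edgeSet := huv
  have himg : G'.edgeSet = (Sym2.map φ) '' (T.graph.edgeSet \ {s(inr u, inr v)}) := by
    ext e
    induction e using Sym2.ind with
    | _ x y =>
      simp only [SimpleGraph.mem_edgeSet, Set.mem_image]
      constructor
      · intro hadj
        obtain ⟨a, b, ha, hb, hadj, hp1, hp2⟩ := (hAdjIff _ _).mp hadj
        refine ⟨s(a, b), ⟨hadj, ?_⟩, by rw [Sym2.map_pair_eq, ha, hb]⟩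
        simp only [Set.mem_singleton_iff, Sym2.eq_iff]
        rintro (⟨h1, h2⟩ | ⟨h1, h2⟩)
        · exact hp1 ⟨h1, h2⟩
        · exact hp2 ⟨h1, h2⟩
      · rintro ⟨e', ⟨he', hne'⟩, heq⟩
        induction e' using Sym2.ind with
        | _ a b =>
          rw [SimpleGraph.mem_edgeSet] at he'
          rw [Sym2.map_pair_eq, Sym2.eq_iff] at heq
          simp only [Set.mem_singleton_iff, Sym2.eq_iff] at hne'
          push_neg at hne'
          rcases heq with ⟨h1, h2⟩ | ⟨h1, h2⟩
          · exact (hAdjIff _ _).mpr ⟨a, b, h1, h2, he', fun ⟨q1, q2⟩ => (hne'.1 q1) q2,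
              fun ⟨q1, q2⟩ => (hne'.2 q1) q2⟩
          · exact (hAdjIff _ _).mpr ⟨b, a, h2, h1, he'.symm, fun ⟨q1, q2⟩ => (hne'.2 q2) q1,
              fun ⟨q1, q2⟩ => (hne'.1 q2) q1⟩
  have hinjOn : Set.InjOn (Sym2.map φ) (T.graph.edgeSet \ {s(inr u, inr v)}) := by
    intro e₁ he₁ e₂ he₂ heq
    induction e₁ using Sym2.ind with
    | _ a b =>
      induction e₂ using Sym2.ind with
      | _ c d =>
        simp only [Set.mem_diff, SimpleGraph.mem_edgeSet, Set.mem_singleton_iff,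
          Sym2.eq_iff] at he₁ he₂
        obtain ⟨hab, hne₁⟩ := he₁
        obtain ⟨hcd, hne₂⟩ := he₂
        push_neg at hne₁ hne₂
        rw [Sym2.map_pair_eq, Sym2.map_pair_eq, Sym2.eq_iff] at heq
        rw [Sym2.eq_iff]
        -- helper for the aligned case
        have aligned : ∀ (a b c d : L ⊕ T.I), T.graph.Adj a b → T.graph.Adj c d →
            (¬(a = inr u ∧ b = inr v) ∧ ¬(a = inr v ∧ b = inr u)) →
            (¬(c = inr u ∧ d = inr v) ∧ ¬(c = inr v ∧ d = inr u)) →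
            φ a = φ c → φ b = φ d → a = c ∧ b = d := by
          intro a b c d hab hcd hne₁ hne₂ hac hbd
          rcases hfib _ _ hac with h1 | ⟨h1, h2⟩ | ⟨h1, h2⟩
          · rcases hfib _ _ hbd with g1 | ⟨g1, g2⟩ | ⟨g1, g2⟩
            · exact ⟨h1, g1⟩
            · exfalso
              rw [g1] at hab
              rw [← h1, g2] at hcd
              exact hcommon a hab hcd
            · exfalso
              rw [g1] at hab
              rw [← h1, g2] at hcd
              exact hcommon a hcd hab
          · -- a = inr u, c = inr v
            rcases hfib _ _ hbd with g1 | ⟨g1, g2⟩ | ⟨g1, g2⟩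
            · exfalso
              rw [h1] at hab
              rw [h2, ← g1] at hcd
              exact hcommon _ hab.symm hcd.symm
            · exfalso
              rw [h1, g1] at hab
              exact T.graph.loopless.irrefl _ hab
            · exact absurd ⟨h1, g1⟩ hne₁.1
          · rcases hfib _ _ hbd with g1 | ⟨g1, g2⟩ | ⟨g1, g2⟩
            · exfalso
              rw [h1] at hab
              rw [h2, ← g1] at hcd
              exact hcommon _ hcd.symm hab.symm
            · exact absurd ⟨h1, g1⟩ hne₁.2
            · exfalso
              rw [h1, g1] at hab
              exact T.graph.loopless.irrefl _ hab
        rcases heq with ⟨h1, h2⟩ | ⟨h1, h2⟩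
        · exact Or.inl (aligned a b c d hab hcd
            ⟨fun ⟨q1, q2⟩ => (hne₁.1 q1) q2, fun ⟨q1, q2⟩ => (hne₁.2 q1) q2⟩
            ⟨fun ⟨q1, q2⟩ => (hne₂.1 q1) q2, fun ⟨q1, q2⟩ => (hne₂.2 q1) q2⟩ h1 h2)
        · have := aligned a b d c hab hcd.symm
            ⟨fun ⟨q1, q2⟩ => (hne₁.1 q1) q2, fun ⟨q1, q2⟩ => (hne₁.2 q1) q2⟩
            ⟨fun ⟨q1, q2⟩ => (hne₂.2 q2) q1, fun ⟨q1, q2⟩ => (hne₂.1 q2) q1⟩ h1 h2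
          exact Or.inr this
  have hT : T.graph.edgeSet.ncard + 1 = Fintype.card (L ⊕ T.I) :=
    IsTree.ncard_edgeSet T.graph T.isTree
  have hEcard : G'.edgeSet.ncard + 1 = T.graph.edgeSet.ncard := by
    rw [himg, Set.ncard_image_of_injOn hinjOn,
      Set.ncard_diff_singleton_of_mem hsetmem]
    have hnon : T.graph.edgeSet.Nonempty := ⟨_, hsetmem⟩
    rw [← Set.ncard_pos (Set.toFinite _)] at hnon
    omega
  have hcardI' : Fintype.card I' + 1 = Fintype.card T.I := by
    have h1 := Fintype.card_subtype_compl (fun i : T.I => i = v)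
    rw [Fintype.card_subtype_eq v] at h1
    have h2 : Fintype.card I' = Fintype.card {x : T.I // ¬x = v} := by
      apply Fintype.card_congr
      exact Equiv.refl _
    have h3 : 1 ≤ Fintype.card T.I := @Fintype.card_pos _ _ ⟨v⟩
    omega
  have hcardV : Fintype.card (L ⊕ I') + 1 = Fintype.card (L ⊕ T.I) := by
    rw [Fintype.card_sum, Fintype.card_sum]
    omega
  have hIsTree : G'.IsTree := by
    apply isTree_of_connected_of_ncard G' hconn
    omega
  -- preimages
  have hpreim : ∀ (a : L ⊕ T.I) (x : L ⊕ I'), φ a = x → a = ψ x ∨ (a = inr v ∧ x = inr u') := by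
    rintro (l | i) x h
    · left; rw [← h]; rfl
    · by_cases hi : i = v
      · subst hi
        right
        exact ⟨rfl, by rw [← h, hφv]⟩
      · left
        rw [← h, hφi i hi]
        rfl
  have hφinj : ∀ S : Set (L ⊕ T.I), ¬(inr u ∈ S ∧ inr v ∈ S) → Set.InjOn φ S := by
    intro S hS a ha b hb hab
    rcases hfib a b hab with h | ⟨h1, h2⟩ | ⟨h1, h2⟩
    · exact h
    · exact absurd ⟨h1 ▸ ha, h2 ▸ hb⟩ hS
    · exact absurd ⟨h2 ▸ hb, h1 ▸ ha⟩ hS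
  -- neighbor sets
  have hNleaf : ∀ l : L, G'.neighborSet (inl l) = φ '' T.graph.neighborSet (inl l) := by
    intro l
    ext y
    simp only [SimpleGraph.mem_neighborSet, Set.mem_image]
    constructor
    · intro h
      obtain ⟨a, b, ha, hb, hadj, -, -⟩ := (hAdjIff _ _).mp h
      rcases hpreim a _ ha with ha' | ⟨-, hx⟩
      · refine ⟨b, ?_, hb⟩
        rw [ha'] at hadj
        exact hadj
      · exact absurd hx (by simp)
    · rintro ⟨b, hb, rfl⟩
      exact (hAdjIff _ _).mpr ⟨inl l, b, hφl l, rfl, hb,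
        fun ⟨q1, _⟩ => by simp at q1, fun ⟨q1, _⟩ => by simp at q1⟩
  have hNmid : ∀ (w : T.I) (hwv : w ≠ v), w ≠ u →
      G'.neighborSet (inr ⟨w, hwv⟩) = φ '' T.graph.neighborSet (inr w) := by
    intro w hwv hwu
    ext y
    simp only [SimpleGraph.mem_neighborSet, Set.mem_image]
    constructor
    · intro h
      obtain ⟨a, b, ha, hb, hadj, -, -⟩ := (hAdjIff _ _).mp h
      rcases hpreim a _ ha with ha' | ⟨-, hx⟩
      · refine ⟨b, ?_, hb⟩
        rw [ha'] at hadj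
        exact hadj
      · exfalso
        apply hwu
        injection hx with hx
        exact congrArg Subtype.val hx
    · rintro ⟨b, hb, rfl⟩
      exact (hAdjIff _ _).mpr ⟨inr w, b, hφi w hwv, rfl, hb,
        fun ⟨q1, _⟩ => hwu (by injection q1), fun ⟨q1, _⟩ => hwv (by injection q1)⟩
  have hNu : G'.neighborSet (inr u') =
      φ '' ((T.graph.neighborSet (inr u) ∪ T.graph.neighborSet (inr v)) \ {inr u, inr v}) := by
    ext y
    simp only [SimpleGraph.mem_neighborSet, Set.mem_image]
    constructor
    · intro h
      have hney : inr u' ≠ y := h.1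
      obtain ⟨a, b, ha, hb, hadj, -, -⟩ := (hAdjIff _ _).mp h
      have hbne : b ≠ inr u ∧ b ≠ inr v := by
        constructor
        · rintro rfl
          rw [hφu] at hb
          exact hney hb
        · rintro rfl
          rw [hφv] at hb
          exact hney hb
      have hbmem : b ∉ ({inr u, inr v} : Set (L ⊕ T.I)) := by
        simp only [Set.mem_insert_iff, Set.mem_singleton_iff]
        push_neg
        exact hbne
      rcases hpreim a _ ha with ha' | ⟨ha', -⟩
      · refine ⟨b, ⟨?_, hbmem⟩, hb⟩
        rw [ha'] at hadj
        exact Or.inl hadj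
      · refine ⟨b, ⟨?_, hbmem⟩, hb⟩
        rw [ha'] at hadj
        exact Or.inr hadj
    · rintro ⟨b, ⟨hbU, hbn⟩, rfl⟩
      simp only [Set.mem_insert_iff, Set.mem_singleton_iff] at hbn
      push_neg at hbn
      rcases hbU with hb | hb
      · exact (hAdjIff _ _).mpr ⟨inr u, b, hφu, rfl, hb,
          fun ⟨_, q2⟩ => hbn.2 q2, fun ⟨q1, _⟩ => hne (by injection q1)⟩
      · exact (hAdjIff _ _).mpr ⟨inr v, b, hφv, rfl, hb,
          fun ⟨q1, _⟩ => hne (by injection q1 with q1; exact q1.symm),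
          fun ⟨_, q2⟩ => hbn.1 q2⟩
  -- degrees
  have hleaf_deg : ∀ l : L, (G'.neighborSet (inl l)).ncard = 1 := by
    intro l
    obtain ⟨a₀, ha₀⟩ := leaf_unique_nbr T l
    rw [hNleaf, ha₀, Set.image_singleton, Set.ncard_singleton]
  have hint_deg : ∀ i : I', (G'.neighborSet (inr i)).ncard ≠ 1 ∧
      (G'.neighborSet (inr i)).ncard ≠ 2 := by
    rintro ⟨w, hwv⟩
    by_cases hwu : w = u
    · subst hwu
      have huu' : (⟨w, hwv⟩ : I') = u' := rfl
      rw [huu', hNu]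
      set S := (T.graph.neighborSet (inr w) ∪ T.graph.neighborSet (inr v)) \ ({inr w, inr v} : Set (L ⊕ T.I)) with hS
      have hinj : Set.InjOn φ S := by
        apply hφinj
        rintro ⟨h1, -⟩
        rw [hS] at h1
        exact h1.2 (Or.inl rfl)
      rw [Set.ncard_image_of_injOn hinj]
      have hdisj : Disjoint (T.graph.neighborSet (inr w)) (T.graph.neighborSet (inr v)) := by
        rw [Set.disjoint_left]
        intro a h1 h2
        exact hcommon a (SimpleGraph.Adj.symm h1) (SimpleGraph.Adj.symm h2)
      have hsub : ({inr w, inr v} : Set (L ⊕ T.I)) ⊆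
          T.graph.neighborSet (inr w) ∪ T.graph.neighborSet (inr v) := by
        rintro x (rfl | rfl)
        · exact Or.inr huv.symm
        · exact Or.inl huv
      rw [hS, Set.ncard_diff hsub (Set.toFinite _),
        Set.ncard_union_eq hdisj (Set.toFinite _) (Set.toFinite _),
        Set.ncard_pair (by simp [hne])]
      have hd1 : 3 ≤ (T.graph.neighborSet (inr w)).ncard := by
        have hnon : 0 < (T.graph.neighborSet (inr w)).ncard := by
          rw [Set.ncard_pos (Set.toFinite _)]
          exact ⟨inr v, huv⟩
        have := T.internal_deg w
        omega
      have hd2 : 3 ≤ (T.graph.neighborSet (inr v)).ncard := by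
        have hnon : 0 < (T.graph.neighborSet (inr v)).ncard := by
          rw [Set.ncard_pos (Set.toFinite _)]
          exact ⟨inr w, huv.symm⟩
        have := T.internal_deg v
        omega
      omega
    · rw [hNmid w hwv hwu]
      have hinj : Set.InjOn φ (T.graph.neighborSet (inr w)) := by
        apply hφinj
        rintro ⟨h1, h2⟩
        exact hcommon (inr w) h1 h2
      rw [Set.ncard_image_of_injOn hinj]
      exact T.internal_deg w
  -- assemble the labelled tree
  refine ⟨⟨I', inferInstance, G', hIsTree, hleaf_deg, hint_deg, fun _ => c⟩,
    fun i => rfl, ?_, ?_⟩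
  · exact hcardI'
  · refine ⟨u, v, φ, by rw [hmono u, hmono v], huv, hφl, hsurj, by rw [hφu, hφv], hfib,
      hAdjIff, fun i i' _ _ _ => (hmono i).symm, fun i' _ => Or.inl (hmono u).symm⟩

end Contract

section Star

variable [Fintype L]

lemma no_leaf_leaf_aux (T : LabTree L) {l₁ l₂ l₃ : L} (h12 : T.graph.Adj (inl l₁) (inl l₂))
    (h31 : l₃ ≠ l₁) (h32 : l₃ ≠ l₂) :
    ∀ (x y : L ⊕ T.I) (w : T.graph.Walk x y), w.IsPath →
      x = inl l₁ → y = inl l₃ → False := by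
  intro x y w
  induction w with
  | nil =>
    rintro _ rfl hy
    injection hy with hy
    exact h31 hy.symm
  | @cons x z y h w' ih =>
    rintro hp rfl hy
    obtain ⟨a, ha⟩ := leaf_unique_nbr T l₁
    have hz : z = inl l₂ := by
      have hm1 : z ∈ T.graph.neighborSet (inl l₁) := h
      have hm2 : (inl l₂ : L ⊕ T.I) ∈ T.graph.neighborSet (inl l₁) := h12
      rw [ha, Set.mem_singleton_iff] at hm1 hm2
      rw [hm1, hm2]
    subst hz
    cases w' with
    | nil =>
      injection hy with hy
      exact h32 hy.symm
    | @cons _ z₂ _ h₂ w'' =>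
      obtain ⟨a₂, ha₂⟩ := leaf_unique_nbr T l₂
      have hz₂ : z₂ = inl l₁ := by
        have hm1 : z₂ ∈ T.graph.neighborSet (inl l₂) := h₂
        have hm2 : (inl l₁ : L ⊕ T.I) ∈ T.graph.neighborSet (inl l₂) := h.symm
        rw [ha₂, Set.mem_singleton_iff] at hm1 hm2
        rw [hm1, hm2]
      rw [SimpleGraph.Walk.cons_isPath_iff] at hp
      apply hp.2
      rw [SimpleGraph.Walk.support_cons]
      right
      rw [← hz₂]
      exact SimpleGraph.Walk.start_mem_support w''

lemma no_leaf_leaf (T : LabTree L) (hL : 3 ≤ Fintype.card L) {l₁ l₂ : L} :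
    ¬ T.graph.Adj (inl l₁) (inl l₂) := by
  classical
  intro h
  have hne : l₁ ≠ l₂ := by
    intro e
    rw [e] at h
    exact T.graph.loopless.irrefl _ h
  have hthird : ∃ l₃ : L, l₃ ≠ l₁ ∧ l₃ ≠ l₂ := by
    by_contra h'
    push_neg at h'
    have hsub : (Finset.univ : Finset L) ⊆ {l₁, l₂} := by
      intro x _
      by_cases hx : x = l₁
      · simp [hx]
      · simp [h' x hx]
    have := Finset.card_le_card hsub
    rw [Finset.card_univ] at this
    have : ({l₁, l₂} : Finset L).card ≤ 2 := Finset.card_insert_le _ _ |>.trans (by simp)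
    omega
  obtain ⟨l₃, h31, h32⟩ := hthird
  obtain ⟨q⟩ := T.isTree.1.preconnected (inl l₁) (inl l₃)
  exact no_leaf_leaf_aux T h h31 h32 _ _ q.toPath.val q.toPath.property rfl rfl

lemma leaf_adj_internal (T : LabTree L) (hL : 3 ≤ Fintype.card L) (l : L) :
    ∃ i : T.I, T.graph.Adj (inl l) (inr i) := by
  obtain ⟨a, ha⟩ := leaf_unique_nbr T l
  have hmem : a ∈ T.graph.neighborSet (inl l) := by rw [ha]; exact rfl
  cases a with
  | inl l' => exact absurd hmem (no_leaf_leaf T hL)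
  | inr i => exact ⟨i, hmem⟩

lemma one_internal_adj (T : LabTree L) (hL : 3 ≤ Fintype.card L) (i₀ : T.I)
    (hall : ∀ j : T.I, j = i₀) (x y : L ⊕ T.I) :
    T.graph.Adj x y ↔ ((∃ l, x = inl l) ∧ y = inr i₀) ∨ (x = inr i₀ ∧ (∃ l, y = inl l)) := by
  constructor
  · intro h
    cases x with
    | inl l =>
      cases y with
      | inl l' => exact absurd h (no_leaf_leaf T hL)
      | inr j => exact Or.inl ⟨⟨l, rfl⟩, by rw [hall j]⟩
    | inr j =>
      cases y with
      | inl l' => exact Or.inr ⟨by rw [hall j], ⟨l', rfl⟩⟩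
      | inr j' =>
        exfalso
        rw [hall j, hall j'] at h
        exact T.graph.loopless.irrefl _ h
  · rintro (⟨⟨l, rfl⟩, rfl⟩ | ⟨rfl, ⟨l, rfl⟩⟩)
    · obtain ⟨i, hi⟩ := leaf_adj_internal T hL l
      rwa [hall i] at hi
    · obtain ⟨i, hi⟩ := leaf_adj_internal T hL l
      rw [hall i] at hi
      exact hi.symm

lemma one_internal_liso (S₁ S₂ : LabTree L) (hL : 3 ≤ Fintype.card L) (c : Lbl)
    (h₁ : Fintype.card S₁.I = 1) (h₂ : Fintype.card S₂.I = 1)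
    (hl₁ : ∀ i, S₁.lbl i = c) (hl₂ : ∀ i, S₂.lbl i = c) : LIso S₁ S₂ := by
  obtain ⟨i₁, hall₁⟩ := Fintype.card_eq_one_iff.mp h₁
  obtain ⟨i₂, hall₂⟩ := Fintype.card_eq_one_iff.mp h₂
  let e : S₁.I ≃ S₂.I :=
    { toFun := fun _ => i₂
      invFun := fun _ => i₁
      left_inv := fun j => (hall₁ j).symm
      right_inv := fun j => (hall₂ j).symm }
  refine ⟨Equiv.sumCongr (Equiv.refl L) e, fun l => rfl, fun a b => ?_, fun i i' h => ?_⟩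
  · rw [one_internal_adj S₁ hL i₁ hall₁, one_internal_adj S₂ hL i₂ hall₂]
    cases a with
    | inl la =>
      cases b with
      | inl lb => simp [Equiv.sumCongr_apply]
      | inr jb => simp [Equiv.sumCongr_apply, hall₁ jb, e]
    | inr ja =>
      cases b with
      | inl lb => simp [Equiv.sumCongr_apply, hall₁ ja, e]
      | inr jb => simp [Equiv.sumCongr_apply, e]
  · rw [hl₂ i', hl₁ i]

lemma reduce (c : Lbl) : ∀ (k : ℕ) (T : LabTree L), (∀ i, T.lbl i = c) →
    Fintype.card T.I = k + 1 →
    ∃ S : LabTree L, Rel k T S ∧ Fintype.card S.I = 1 ∧ ∀ i, S.lbl i = c := by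
  intro k
  induction k with
  | zero =>
    intro T hm hc
    exact ⟨T, Rel.refl (LIso.refl T), hc, hm⟩
  | succ k ih =>
    intro T hm hc
    obtain ⟨u, v, huv⟩ := exists_internal_edge T (by omega)
    obtain ⟨T', hm', hcard', hcontr⟩ := contract_step T c hm huv
    obtain ⟨S, hrel, h1, hl⟩ := ih T' hm' (by omega)
    exact ⟨S, Rel.cons (LIso.refl T) (Or.inr (Or.inl hcontr)) hrel, h1, hl⟩

lemma mismatch_sum (T : LabTree L) :
    (Finset.univ.filter (fun i => T.lbl i ≠ Lbl.spec)).card +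
      (Finset.univ.filter (fun i => T.lbl i ≠ Lbl.dup)).card = Fintype.card T.I := by
  classical
  have h1 : (Finset.univ.filter (fun i => T.lbl i ≠ Lbl.dup)) =
      (Finset.univ.filter (fun i => T.lbl i = Lbl.spec)) := by
    ext i
    simp only [Finset.mem_filter, Finset.mem_univ, true_and]
    cases h : T.lbl i <;> simp
  have h2 : (Finset.univ.filter (fun i => T.lbl i ≠ Lbl.spec)) =
      (Finset.univ.filter (fun i => ¬(T.lbl i = Lbl.spec))) := by
    ext i
    simp
  rw [h1, h2, Nat.add_comm, Finset.card_filter_add_card_filter_not, Finset.card_univ]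

lemma main_chain (hL : 3 ≤ Fintype.card L) (T₁ T₂ : LabTree L) :
    ∃ k, k ≤ 3 * Fintype.card L - 8 ∧ Rel k T₁ T₂ := by
  classical
  set n := Fintype.card L with hn
  let m : LabTree L → Lbl → ℕ :=
    fun T c => (Finset.univ.filter (fun i => T.lbl i ≠ c)).card
  obtain ⟨c, hc⟩ : ∃ c : Lbl, 2 * (m T₁ c + m T₂ c) ≤
      Fintype.card T₁.I + Fintype.card T₂.I := by
    have e1 := mismatch_sum T₁
    have e2 := mismatch_sum T₂
    by_cases h : m T₁ Lbl.spec + m T₂ Lbl.spec ≤ m T₁ Lbl.dup + m T₂ Lbl.dup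
    · refine ⟨Lbl.spec, ?_⟩
      simp only [m] at *
      omega
    · refine ⟨Lbl.dup, ?_⟩
      simp only [m] at *
      omega
  have hf1 := cardI_facts T₁ hL
  have hf2 := cardI_facts T₂ hL
  -- side 1
  have r1a : Rel (m T₁ c) T₁ (relabel T₁ (fun _ => c)) := flip_chain T₁ (fun _ => c)
  have hcard1 : Fintype.card (relabel T₁ (fun _ => c)).I = Fintype.card T₁.I := rfl
  obtain ⟨S₁, r1b, hS₁card, hS₁lbl⟩ := reduce c (Fintype.card T₁.I - 1)
    (relabel T₁ (fun _ => c)) (fun i => rfl) (by rw [hcard1]; omega)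
  have R1 : Rel (m T₁ c + (Fintype.card T₁.I - 1)) T₁ S₁ := r1a.trans r1b
  -- side 2
  have r2a : Rel (m T₂ c) T₂ (relabel T₂ (fun _ => c)) := flip_chain T₂ (fun _ => c)
  have hcard2 : Fintype.card (relabel T₂ (fun _ => c)).I = Fintype.card T₂.I := rfl
  obtain ⟨S₂, r2b, hS₂card, hS₂lbl⟩ := reduce c (Fintype.card T₂.I - 1)
    (relabel T₂ (fun _ => c)) (fun i => rfl) (by rw [hcard2]; omega)
  have R2 : Rel (m T₂ c + (Fintype.card T₂.I - 1)) T₂ S₂ := r2a.trans r2b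
  -- glue
  have hIso : LIso S₁ S₂ := one_internal_liso S₁ S₂ hL c hS₁card hS₂card hS₁lbl hS₂lbl
  have Rtot := (R1.congr_right hIso).trans R2.symm
  refine ⟨_, ?_, Rtot⟩
  have h1 := hf1.1
  have h2 := hf1.2
  have h3 := hf2.1
  have h4 := hf2.2
  omega

end Star

end ELRFAux


/-- the ELRF distance between two labeled trees on the same set of `n ≥ 3`
leaves is at most `3n − 8`: one can be transformed into the other by at most `3n − 8`
label-flips, labeled contractions, and labeled extensions. -/
theorem stmt14 [Fintype L] (n : ℕ) (hn : Fintype.card L = n) (h3 : 3 ≤ n)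
    (T₁ T₂ : LabTree L) :
    ∃ k ≤ 3 * n - 8, ∃ f : ℕ → LabTree L,
      LIso (f 0) T₁ ∧ LIso (f k) T₂ ∧ ∀ i < k, ELRFStep (f i) (f (i + 1)) := by
  obtain ⟨k, hk, r⟩ := ELRFAux.main_chain (by omega) T₁ T₂
  obtain ⟨f, hf0, hfk, hfs⟩ := r.exists_fun
  exact ⟨k, by omega, f, hf0, hfk, hfs⟩
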